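/- Let f, g : ℂ → ℂ be complex differentiable (entire) functions. Define holomorphic functions on ℂ²: P₁(x,y) = x·y, P₂(x,y) = -(g'(x) + f'(y))/2, P₃(x,y) = x, P₄(x,y) = f(y) - y·(g'(x) + f'(y))/2, P₅(x,y) = y, P₆(x,y) = g(x) - x·(g'(x) + f'(y))/2, and let Φ : ℂ² → ℝ⁶ be Φ = (Re(P₁+P₂), Im(P₁-P₂), Re(P₃-P₄), Im(P₃+P₄), Re(P₅-P₆), Im(P₅+P₆)). Then Φ is an immersion whose pullback of the Euclidean metric is invariant under the complex structure: for every z ∈ ℂ², the real differential DΦ(z) : ℂ² ≅ ℝ⁴ → ℝ⁶ is injective, and ⟨DΦ(z)(i·v), DΦ(z)(i·w)⟩ = ⟨DΦ(z)(v), DΦ(z)(w)⟩ for all v, w ∈ ℂ². -/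

import Mathlib

open ContinuousLinearMap

private noncomputable def clin (c d : ℂ) : ℂ × ℂ →L[ℂ] ℂ :=
  c • ContinuousLinearMap.fst ℂ ℂ ℂ + d • ContinuousLinearMap.snd ℂ ℂ ℂ

@[simp] private lemma clin_apply (c d : ℂ) (p : ℂ × ℂ) : clin c d p = c * p.1 + d * p.2 := by
  simp [clin]

private lemma hasFDerivAt_clin {F : ℂ × ℂ → ℂ} {L : ℂ × ℂ →L[ℂ] ℂ} {z : ℂ × ℂ} {c d : ℂ}
    (h : HasFDerivAt F L z) (hL : ∀ p : ℂ × ℂ, L p = c * p.1 + d * p.2) :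
    HasFDerivAt F (clin c d) z := by
  have hE : L = clin c d := ContinuousLinearMap.ext fun p => by rw [hL, clin_apply]
  exact hE ▸ h

private noncomputable def reL (c d : ℂ) : ℂ × ℂ →L[ℝ] ℝ :=
  Complex.reCLM.comp ((clin c d).restrictScalars ℝ)
private noncomputable def imL (c d : ℂ) : ℂ × ℂ →L[ℝ] ℝ :=
  Complex.imCLM.comp ((clin c d).restrictScalars ℝ)

@[simp] private lemma reL_apply (c d : ℂ) (p : ℂ × ℂ) : reL c d p = (c * p.1 + d * p.2).re := by
  simp [reL]
@[simp] private lemma imL_apply (c d : ℂ) (p : ℂ × ℂ) : imL c d p = (c * p.1 + d * p.2).im := by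
  simp [imL]

@[simp] private lemma re_half (z : ℂ) : (z / 2).re = z.re / 2 := by
  rw [Complex.div_re]; simp [Complex.normSq]; ring
@[simp] private lemma im_half (z : ℂ) : (z / 2).im = z.im / 2 := by
  rw [Complex.div_im]; simp [Complex.normSq]; ring

private noncomputable def mkL (T : Fin 6 → (ℂ × ℂ →L[ℝ] ℝ)) :
    ℂ × ℂ →L[ℝ] EuclideanSpace ℝ (Fin 6) :=
  ((PiLp.continuousLinearEquiv 2 ℝ (fun _ : Fin 6 => ℝ)).symm :
      (Fin 6 → ℝ) ≃L[ℝ] EuclideanSpace ℝ (Fin 6)).toContinuousLinearMap.comp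
    (ContinuousLinearMap.pi T)

@[simp] private lemma mkL_apply (T : Fin 6 → (ℂ × ℂ →L[ℝ] ℝ)) (p : ℂ × ℂ) (i : Fin 6) :
    mkL T p i = T i p := by
  simp [mkL]

private lemma inner_mkL (T : Fin 6 → (ℂ × ℂ →L[ℝ] ℝ)) (p q : ℂ × ℂ) :
    @inner ℝ (EuclideanSpace ℝ (Fin 6)) _ (mkL T p) (mkL T q) =
      T 0 p * T 0 q + T 1 p * T 1 q + T 2 p * T 2 q + T 3 p * T 3 q +
        T 4 p * T 4 q + T 5 p * T 5 q := by
  simp [PiLp.inner_apply, RCLike.inner_apply, Fin.sum_univ_six]; ring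

private lemma mkL_eq_zero {T : Fin 6 → (ℂ × ℂ →L[ℝ] ℝ)} {p : ℂ × ℂ}
    (h : mkL T p = 0) (i : Fin 6) : T i p = 0 := by
  have : mkL T p i = (0 : EuclideanSpace ℝ (Fin 6)) i := by rw [h]
  simpa using this

section vec6
variable {α : Type*} (a b c d e f : α)
@[simp] private lemma vec6_0 : ![a,b,c,d,e,f] 0 = a := rfl
@[simp] private lemma vec6_1 : ![a,b,c,d,e,f] 1 = b := rfl
@[simp] private lemma vec6_2 : ![a,b,c,d,e,f] 2 = c := rfl
@[simp] private lemma vec6_3 : ![a,b,c,d,e,f] 3 = d := rfl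
@[simp] private lemma vec6_4 : ![a,b,c,d,e,f] 4 = e := rfl
@[simp] private lemma vec6_5 : ![a,b,c,d,e,f] 5 = f := rfl
end vec6

set_option maxHeartbeats 4000000 in
/-- The family of pluriminimal maps `Φ : ℂ² → ℝ⁶` built from entire `f, g` via the
Weierstrass formula (generalizing Furuhata's example) is an immersion whose pullback
of the euclidean metric is invariant under multiplication by `i`. -/
theorem furuhata_family_is_pluriminimal_immersion
    (f g : ℂ → ℂ) (hf : Differentiable ℂ f) (hg : Differentiable ℂ g)
    (Φ : ℂ × ℂ → EuclideanSpace ℝ (Fin 6))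
    (hΦ : ∀ x y : ℂ, Φ (x, y) =
      ![(x * y + (-(deriv g x + deriv f y) / 2)).re,
        (x * y - (-(deriv g x + deriv f y) / 2)).im,
        (x - (f y - y * (deriv g x + deriv f y) / 2)).re,
        (x + (f y - y * (deriv g x + deriv f y) / 2)).im,
        (y - (g x - x * (deriv g x + deriv f y) / 2)).re,
        (y + (g x - x * (deriv g x + deriv f y) / 2)).im]) :
    ∀ z : ℂ × ℂ,
      Function.Injective (fderiv ℝ Φ z) ∧
      ∀ v w : ℂ × ℂ,
        @inner ℝ (EuclideanSpace ℝ (Fin 6)) _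
            (fderiv ℝ Φ z (Complex.I • v)) (fderiv ℝ Φ z (Complex.I • w)) =
          @inner ℝ (EuclideanSpace ℝ (Fin 6)) _ (fderiv ℝ Φ z v) (fderiv ℝ Φ z w) := by
  have hg' : Differentiable ℂ (deriv g) :=
    ((contDiff_infty_iff_deriv.mp hg.contDiff).2).differentiable (by simp)
  have hf' : Differentiable ℂ (deriv f) :=
    ((contDiff_infty_iff_deriv.mp hf.contDiff).2).differentiable (by simp)
  rintro ⟨x, y⟩
  set a := deriv g x with ha
  set b := deriv f y with hb
  set A := deriv (deriv g) x with hA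
  set B := deriv (deriv f) y with hB
  -- basic derivative facts
  have hdg : HasFDerivAt (fun p : ℂ × ℂ => deriv g p.1)
      (((1 : ℂ →L[ℂ] ℂ).smulRight A).comp (ContinuousLinearMap.fst ℂ ℂ ℂ)) (x, y) :=
    HasFDerivAt.comp (f := Prod.fst) (x, y) (hg' x).hasDerivAt.hasFDerivAt hasFDerivAt_fst
  have hdf : HasFDerivAt (fun p : ℂ × ℂ => deriv f p.2)
      (((1 : ℂ →L[ℂ] ℂ).smulRight B).comp (ContinuousLinearMap.snd ℂ ℂ ℂ)) (x, y) :=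
    HasFDerivAt.comp (f := Prod.snd) (x, y) (hf' y).hasDerivAt.hasFDerivAt hasFDerivAt_snd
  have hgc : HasFDerivAt (fun p : ℂ × ℂ => g p.1)
      (((1 : ℂ →L[ℂ] ℂ).smulRight a).comp (ContinuousLinearMap.fst ℂ ℂ ℂ)) (x, y) :=
    HasFDerivAt.comp (f := Prod.fst) (x, y) (hg x).hasDerivAt.hasFDerivAt hasFDerivAt_fst
  have hfc : HasFDerivAt (fun p : ℂ × ℂ => f p.2)
      (((1 : ℂ →L[ℂ] ℂ).smulRight b).comp (ContinuousLinearMap.snd ℂ ℂ ℂ)) (x, y) :=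
    HasFDerivAt.comp (f := Prod.snd) (x, y) (hf y).hasDerivAt.hasFDerivAt hasFDerivAt_snd
  have hmul : HasFDerivAt (fun p : ℂ × ℂ => p.1 * p.2) _ (x, y) :=
    (hasFDerivAt_fst (𝕜 := ℂ) (p := ((x, y) : ℂ × ℂ))).mul hasFDerivAt_snd
  -- the six holomorphic component functions
  have hG0 : HasFDerivAt (fun p : ℂ × ℂ => p.1 * p.2 + -(deriv g p.1 + deriv f p.2) / 2)
      (clin (y - A / 2) (x - B / 2)) (x, y) := by
    refine hasFDerivAt_clin (hmul.add (((hdg.add hdf).neg).mul_const ((2:ℂ)⁻¹))) ?_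
    intro p; simp [smul_eq_mul]; ring
  have hG1 : HasFDerivAt (fun p : ℂ × ℂ => p.1 * p.2 - -(deriv g p.1 + deriv f p.2) / 2)
      (clin (y + A / 2) (x + B / 2)) (x, y) := by
    refine hasFDerivAt_clin (hmul.sub (((hdg.add hdf).neg).mul_const ((2:ℂ)⁻¹))) ?_
    intro p; simp [smul_eq_mul]; ring
  have hG2 : HasFDerivAt
      (fun p : ℂ × ℂ => p.1 - (f p.2 - p.2 * (deriv g p.1 + deriv f p.2) / 2))
      (clin (1 + y * A / 2) ((a - b) / 2 + y * B / 2)) (x, y) := by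
    refine hasFDerivAt_clin
      (hasFDerivAt_fst.sub
        (hfc.sub ((hasFDerivAt_snd.mul (hdg.add hdf)).mul_const ((2:ℂ)⁻¹)))) ?_
    intro p; simp [smul_eq_mul]; ring
  have hG3 : HasFDerivAt
      (fun p : ℂ × ℂ => p.1 + (f p.2 - p.2 * (deriv g p.1 + deriv f p.2) / 2))
      (clin (1 - y * A / 2) ((b - a) / 2 - y * B / 2)) (x, y) := by
    refine hasFDerivAt_clin
      (hasFDerivAt_fst.add
        (hfc.sub ((hasFDerivAt_snd.mul (hdg.add hdf)).mul_const ((2:ℂ)⁻¹)))) ?_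
    intro p; simp [smul_eq_mul]; ring
  have hG4 : HasFDerivAt
      (fun p : ℂ × ℂ => p.2 - (g p.1 - p.1 * (deriv g p.1 + deriv f p.2) / 2))
      (clin ((b - a) / 2 + x * A / 2) (1 + x * B / 2)) (x, y) := by
    refine hasFDerivAt_clin
      (hasFDerivAt_snd.sub
        (hgc.sub ((hasFDerivAt_fst.mul (hdg.add hdf)).mul_const ((2:ℂ)⁻¹)))) ?_
    intro p; simp [smul_eq_mul]; ring
  have hG5 : HasFDerivAt
      (fun p : ℂ × ℂ => p.2 + (g p.1 - p.1 * (deriv g p.1 + deriv f p.2) / 2))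
      (clin ((a - b) / 2 - x * A / 2) (1 - x * B / 2)) (x, y) := by
    refine hasFDerivAt_clin
      (hasFDerivAt_snd.add
        (hgc.sub ((hasFDerivAt_fst.mul (hdg.add hdf)).mul_const ((2:ℂ)⁻¹)))) ?_
    intro p; simp [smul_eq_mul]; ring
  -- the six real components
  have h0 : HasFDerivAt
      (fun p : ℂ × ℂ => (p.1 * p.2 + -(deriv g p.1 + deriv f p.2) / 2).re)
      (reL (y - A / 2) (x - B / 2)) (x, y) :=
    (Complex.reCLM.hasFDerivAt).comp (x, y) (hG0.restrictScalars ℝ)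
  have h1 : HasFDerivAt
      (fun p : ℂ × ℂ => (p.1 * p.2 - -(deriv g p.1 + deriv f p.2) / 2).im)
      (imL (y + A / 2) (x + B / 2)) (x, y) :=
    (Complex.imCLM.hasFDerivAt).comp (x, y) (hG1.restrictScalars ℝ)
  have h2 : HasFDerivAt
      (fun p : ℂ × ℂ => (p.1 - (f p.2 - p.2 * (deriv g p.1 + deriv f p.2) / 2)).re)
      (reL (1 + y * A / 2) ((a - b) / 2 + y * B / 2)) (x, y) :=
    (Complex.reCLM.hasFDerivAt).comp (x, y) (hG2.restrictScalars ℝ)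
  have h3 : HasFDerivAt
      (fun p : ℂ × ℂ => (p.1 + (f p.2 - p.2 * (deriv g p.1 + deriv f p.2) / 2)).im)
      (imL (1 - y * A / 2) ((b - a) / 2 - y * B / 2)) (x, y) :=
    (Complex.imCLM.hasFDerivAt).comp (x, y) (hG3.restrictScalars ℝ)
  have h4 : HasFDerivAt
      (fun p : ℂ × ℂ => (p.2 - (g p.1 - p.1 * (deriv g p.1 + deriv f p.2) / 2)).re)
      (reL ((b - a) / 2 + x * A / 2) (1 + x * B / 2)) (x, y) :=
    (Complex.reCLM.hasFDerivAt).comp (x, y) (hG4.restrictScalars ℝ)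
  have h5 : HasFDerivAt
      (fun p : ℂ × ℂ => (p.2 + (g p.1 - p.1 * (deriv g p.1 + deriv f p.2) / 2)).im)
      (imL ((a - b) / 2 - x * A / 2) (1 - x * B / 2)) (x, y) :=
    (Complex.imCLM.hasFDerivAt).comp (x, y) (hG5.restrictScalars ℝ)
  set Ls : Fin 6 → (ℂ × ℂ →L[ℝ] ℝ) :=
    ![reL (y - A / 2) (x - B / 2),
      imL (y + A / 2) (x + B / 2),
      reL (1 + y * A / 2) ((a - b) / 2 + y * B / 2),
      imL (1 - y * A / 2) ((b - a) / 2 - y * B / 2),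
      reL ((b - a) / 2 + x * A / 2) (1 + x * B / 2),
      imL ((a - b) / 2 - x * A / 2) (1 - x * B / 2)] with hLs
  have hΦeq : Φ = fun p : ℂ × ℂ =>
      (WithLp.toLp 2 ![(p.1 * p.2 + (-(deriv g p.1 + deriv f p.2) / 2)).re,
        (p.1 * p.2 - (-(deriv g p.1 + deriv f p.2) / 2)).im,
        (p.1 - (f p.2 - p.2 * (deriv g p.1 + deriv f p.2) / 2)).re,
        (p.1 + (f p.2 - p.2 * (deriv g p.1 + deriv f p.2) / 2)).im,
        (p.2 - (g p.1 - p.1 * (deriv g p.1 + deriv f p.2) / 2)).re,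
        (p.2 + (g p.1 - p.1 * (deriv g p.1 + deriv f p.2) / 2)).im] :
          EuclideanSpace ℝ (Fin 6)) :=
    funext fun p => (WithLp.toLp_ofLp (x := Φ p)).symm.trans (congrArg (WithLp.toLp 2) (hΦ p.1 p.2))
  have hpi : HasFDerivAt (fun p : ℂ × ℂ =>
      (![(p.1 * p.2 + (-(deriv g p.1 + deriv f p.2) / 2)).re,
        (p.1 * p.2 - (-(deriv g p.1 + deriv f p.2) / 2)).im,
        (p.1 - (f p.2 - p.2 * (deriv g p.1 + deriv f p.2) / 2)).re,
        (p.1 + (f p.2 - p.2 * (deriv g p.1 + deriv f p.2) / 2)).im,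
        (p.2 - (g p.1 - p.1 * (deriv g p.1 + deriv f p.2) / 2)).re,
        (p.2 + (g p.1 - p.1 * (deriv g p.1 + deriv f p.2) / 2)).im] : Fin 6 → ℝ))
      (ContinuousLinearMap.pi Ls) (x, y) := by
    apply hasFDerivAt_pi''
    intro i
    fin_cases i
    · rw [ContinuousLinearMap.proj_pi]; exact h0
    · rw [ContinuousLinearMap.proj_pi]; exact h1
    · rw [ContinuousLinearMap.proj_pi]; exact h2
    · rw [ContinuousLinearMap.proj_pi]; exact h3
    · rw [ContinuousLinearMap.proj_pi]; exact h4
    · rw [ContinuousLinearMap.proj_pi]; exact h5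
  have hL : HasFDerivAt Φ (mkL Ls) (x, y) := by
    rw [hΦeq]
    exact ((PiLp.continuousLinearEquiv 2 ℝ (fun _ : Fin 6 => ℝ)).symm :
        (Fin 6 → ℝ) ≃L[ℝ] EuclideanSpace ℝ (Fin 6)).toContinuousLinearMap.hasFDerivAt.comp
      (x, y) hpi
  have hfd : fderiv ℝ Φ (x, y) = mkL Ls := hL.fderiv
  rw [hfd]
  constructor
  · -- injectivity
    intro p q hpq
    have hz : mkL Ls (p - q) = 0 := by rw [map_sub, hpq, sub_self]
    set u := p.1 - q.1 with hu
    set v := p.2 - q.2 with hv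
    have hcoord : ∀ i, Ls i (p - q) = 0 := fun i => mkL_eq_zero hz i
    have e0 : ((y - A / 2) * u + (x - B / 2) * v).re = 0 := by
      have := hcoord 0; rwa [hLs, vec6_0, reL_apply] at this
    have e1 : ((y + A / 2) * u + (x + B / 2) * v).im = 0 := by
      have := hcoord 1; rwa [hLs, vec6_1, imL_apply] at this
    have e2 : ((1 + y * A / 2) * u + ((a - b) / 2 + y * B / 2) * v).re = 0 := by
      have := hcoord 2; rwa [hLs, vec6_2, reL_apply] at this
    have e3 : ((1 - y * A / 2) * u + ((b - a) / 2 - y * B / 2) * v).im = 0 := by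
      have := hcoord 3; rwa [hLs, vec6_3, imL_apply] at this
    have e4 : (((b - a) / 2 + x * A / 2) * u + (1 + x * B / 2) * v).re = 0 := by
      have := hcoord 4; rwa [hLs, vec6_4, reL_apply] at this
    have e5 : (((a - b) / 2 - x * A / 2) * u + (1 - x * B / 2) * v).im = 0 := by
      have := hcoord 5; rwa [hLs, vec6_5, imL_apply] at this
    have hkey : ((y - A / 2) * u + (x - B / 2) * v).re ^ 2
        + ((y + A / 2) * u + (x + B / 2) * v).im ^ 2
        + ((1 + y * A / 2) * u + ((a - b) / 2 + y * B / 2) * v).re ^ 2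
        + ((1 - y * A / 2) * u + ((b - a) / 2 - y * B / 2) * v).im ^ 2
        + (((b - a) / 2 + x * A / 2) * u + (1 + x * B / 2) * v).re ^ 2
        + (((a - b) / 2 - x * A / 2) * u + (1 - x * B / 2) * v).im ^ 2
        = Complex.normSq (y * u + x * v)
          + Complex.normSq ((A * u + B * v) / 2)
          + Complex.normSq u
          + Complex.normSq (((b - a) / 2 - y * B / 2) * v - y * A / 2 * u)
          + Complex.normSq v
          + Complex.normSq (((a - b) / 2 - x * A / 2) * u - x * B / 2 * v) := by
      simp only [Complex.normSq_apply, Complex.add_re, Complex.add_im, Complex.sub_re,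
        Complex.sub_im, Complex.mul_re, Complex.mul_im, re_half, im_half,
        Complex.one_re, Complex.one_im]
      ring
    rw [e0, e1, e2, e3, e4, e5] at hkey
    norm_num at hkey
    have huz : Complex.normSq u = 0 := by
      linarith [Complex.normSq_nonneg (y * u + x * v),
        Complex.normSq_nonneg (A * u + B * v),
        Complex.normSq_nonneg u,
        Complex.normSq_nonneg (((b - a) / 2 - y * B / 2) * v - y * A / 2 * u),
        Complex.normSq_nonneg v,
        Complex.normSq_nonneg (((a - b) / 2 - x * A / 2) * u - x * B / 2 * v)]
    have hvz : Complex.normSq v = 0 := by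
      linarith [Complex.normSq_nonneg (y * u + x * v),
        Complex.normSq_nonneg (A * u + B * v),
        Complex.normSq_nonneg u,
        Complex.normSq_nonneg (((b - a) / 2 - y * B / 2) * v - y * A / 2 * u),
        Complex.normSq_nonneg v,
        Complex.normSq_nonneg (((a - b) / 2 - x * A / 2) * u - x * B / 2 * v)]
    have hu0 : p.1 = q.1 := sub_eq_zero.mp (Complex.normSq_eq_zero.mp huz)
    have hv0 : p.2 = q.2 := sub_eq_zero.mp (Complex.normSq_eq_zero.mp hvz)
    exact Prod.ext hu0 hv0
  · -- Kähler invariance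
    intro v w
    rw [inner_mkL, inner_mkL, hLs]
    simp only [vec6_0, vec6_1, vec6_2, vec6_3, vec6_4, vec6_5, reL_apply, imL_apply,
      Prod.smul_fst, Prod.smul_snd, smul_eq_mul]
    simp only [Complex.add_re, Complex.add_im, Complex.sub_re, Complex.sub_im,
      Complex.mul_re, Complex.mul_im, re_half, im_half, Complex.one_re, Complex.one_im,
      Complex.I_re, Complex.I_im]
    ring
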